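/- Let d = d₁ + ⋯ + d_r with r ≥ 2, d_j ≥ 1, and let V : ℤ^d → ℂ be Γ-periodic. Then V is (d₁,…,d_r)-separable if and only if V is (s,t)-separable for every pair of indices s, t lying in distinct blocks, i.e. for every 1 ≤ i < m ≤ r and every s in block i and t in block m (where block j consists of indices d₀+⋯+d_{j-1}+1 through d₁+⋯+d_j). -/
import Mathlib


open scoped BigOperators

/-- `f` depends only on the coordinates in `S`. -/
def DependsOnlyOn {d : ℕ} (S : Set (Fin d)) (f : (Fin d → ℤ) → ℂ) : Prop :=
  ∀ n n' : Fin d → ℤ, (∀ j ∈ S, n j = n' j) → f n = f n'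

/-- `(s,t)`-separability. -/
def SepPair {d : ℕ} (s t : Fin d) (V : (Fin d → ℤ) → ℂ) : Prop :=
  ∃ Vs Vt : (Fin d → ℤ) → ℂ,
    DependsOnlyOn ({t} : Set (Fin d))ᶜ Vs ∧
    DependsOnlyOn ({s} : Set (Fin d))ᶜ Vt ∧
    ∀ n, V n = Vs n + Vt n

/-- `Γ`-periodicity for `Γ = q₁ℤ ⊕ ⋯ ⊕ q_dℤ`. -/
def IsPeriodic {d : ℕ} (q : Fin d → ℕ) (V : (Fin d → ℤ) → ℂ) : Prop :=
  ∀ (n : Fin d → ℤ) (j : Fin d),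
    V (fun i => n i + if i = j then (q i : ℤ) else 0) = V n

/-- The offset `d₀ + ⋯ + d_{i-1}` of the `i`-th block. -/
def blockOffset {r : ℕ} (dv : Fin r → ℕ) (i : Fin r) : ℕ :=
  ∑ j ∈ Finset.Iio i, dv j

/-- The set of coordinate indices lying in the `i`-th block. -/
def blockSet {r d : ℕ} (dv : Fin r → ℕ) (i : Fin r) : Set (Fin d) :=
  {s | blockOffset dv i ≤ (s : ℕ) ∧ (s : ℕ) < blockOffset dv i + dv i}

/-- `(d₁,…,d_r)`-separability: `V` is a sum of functions each depending only on the
coordinates of one block. -/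
def BlockSep {r d : ℕ} (dv : Fin r → ℕ) (V : (Fin d → ℤ) → ℂ) : Prop :=
  ∃ Vb : Fin r → (Fin d → ℤ) → ℂ,
    (∀ i, DependsOnlyOn (blockSet dv i) (Vb i)) ∧ ∀ n, V n = ∑ i, Vb i n


section Aux

lemma blockOffset_add_le {r : ℕ} (dv : Fin r → ℕ) {i i' : Fin r} (h : i < i') :
    blockOffset dv i + dv i ≤ blockOffset dv i' := by
  have h1 : insert i (Finset.Iio i) ⊆ Finset.Iio i' := by
    intro k hk
    simp only [Finset.mem_insert, Finset.mem_Iio] at *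
    rcases hk with rfl | hk
    · exact h
    · exact hk.trans h
  have h2 : blockOffset dv i + dv i = ∑ k ∈ insert i (Finset.Iio i), dv k := by
    rw [Finset.sum_insert (by simp)]
    unfold blockOffset
    ring
  rw [h2]
  exact Finset.sum_le_sum_of_subset h1

lemma blockSet_disj {r d : ℕ} (dv : Fin r → ℕ) {i i' : Fin r} (h : i ≠ i') {j : Fin d}
    (hj : j ∈ blockSet dv i) (hj' : j ∈ blockSet dv i') : False := by
  simp only [blockSet, Set.mem_setOf_eq] at hj hj'
  rcases lt_or_gt_of_ne h with hlt | hlt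
  · have := blockOffset_add_le dv hlt
    omega
  · have := blockOffset_add_le dv hlt
    omega

lemma exists_block {r d : ℕ} (dv : Fin r → ℕ) (hd : d = ∑ j, dv j) (hr : 0 < r)
    (j : Fin d) : ∃ i, j ∈ blockSet dv i := by
  classical
  set F := Finset.univ.filter (fun i => blockOffset dv i ≤ (j : ℕ)) with hF
  have hne : F.Nonempty := by
    refine ⟨⟨0, hr⟩, ?_⟩
    rw [hF]
    simp only [Finset.mem_filter, Finset.mem_univ, true_and]
    have hIio : Finset.Iio (⟨0, hr⟩ : Fin r) = ∅ := by
      ext k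
      simp [Fin.lt_def]
    unfold blockOffset
    rw [hIio]
    simp
  set i := F.max' hne with hi
  have hile : blockOffset dv i ≤ (j : ℕ) := by
    have hmem : i ∈ F := F.max'_mem hne
    exact (Finset.mem_filter.mp hmem).2
  by_cases hlt : (j : ℕ) < blockOffset dv i + dv i
  · exact ⟨i, ⟨hile, hlt⟩⟩
  push_neg at hlt
  exfalso
  by_cases htop : (i : ℕ) + 1 < r
  · have hmem : (⟨(i : ℕ) + 1, htop⟩ : Fin r) ∈ F := by
      refine Finset.mem_filter.mpr ⟨Finset.mem_univ _, ?_⟩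
      have hins : Finset.Iio (⟨(i : ℕ) + 1, htop⟩ : Fin r) = insert i (Finset.Iio i) := by
        ext k
        simp only [Finset.mem_Iio, Fin.lt_def, Finset.mem_insert, Fin.ext_iff]
        omega
      have hoff : blockOffset dv ⟨(i : ℕ) + 1, htop⟩ = blockOffset dv i + dv i := by
        unfold blockOffset
        rw [hins, Finset.sum_insert (by simp)]
        ring
      omega
    have hle := F.le_max' _ hmem
    rw [← hi] at hle
    simp only [Fin.le_def] at hle
    omega
  · have htot : d = blockOffset dv i + dv i := by
      rw [hd]
      have huniv : (Finset.univ : Finset (Fin r)) = insert i (Finset.Iio i) := by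
        ext k
        simp only [Finset.mem_univ, Finset.mem_insert, Finset.mem_Iio, Fin.lt_def,
          Fin.ext_iff, true_iff]
        have := k.isLt
        omega
      rw [huniv, Finset.sum_insert (by simp)]
      unfold blockOffset
      ring
    have := j.isLt
    omega

lemma sepPair_symm {d : ℕ} {s t : Fin d} {V : (Fin d → ℤ) → ℂ}
    (h : SepPair s t V) : SepPair t s V := by
  obtain ⟨Vs, Vt, h1, h2, h3⟩ := h
  exact ⟨Vt, Vs, h2, h1, fun n => by rw [h3 n]; ring⟩

lemma step_lemma {d : ℕ} {s t : Fin d} {V : (Fin d → ℤ) → ℂ}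
    (h : SepPair s t V) (n : Fin d → ℤ) (x y : ℤ) :
    V (Function.update (Function.update n t y) s x) - V (Function.update n t y)
      = V (Function.update n s x) - V n := by
  obtain ⟨Vs, Vt, hVs, hVt, hsum⟩ := h
  have e1 : Vs (Function.update (Function.update n t y) s x)
      = Vs (Function.update n s x) := by
    apply hVs
    intro j hj
    simp only [Set.mem_compl_iff, Set.mem_singleton_iff] at hj
    simp [Function.update_apply, hj]
  have e2 : Vs (Function.update n t y) = Vs n := by
    apply hVs
    intro j hj
    simp only [Set.mem_compl_iff, Set.mem_singleton_iff] at hj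
    simp [Function.update_apply, hj]
  have e3 : Vt (Function.update (Function.update n t y) s x)
      = Vt (Function.update n t y) := by
    apply hVt
    intro j hj
    simp only [Set.mem_compl_iff, Set.mem_singleton_iff] at hj
    simp [Function.update_apply, hj]
  have e4 : Vt (Function.update n s x) = Vt n := by
    apply hVt
    intro j hj
    simp only [Set.mem_compl_iff, Set.mem_singleton_iff] at hj
    simp [Function.update_apply, hj]
  rw [hsum, hsum, hsum, hsum, e1, e2, e3, e4]
  ring

lemma deriv_indep {r d : ℕ} {V : (Fin d → ℤ) → ℂ} (β : Fin d → Fin r)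
    (hsep : ∀ s t : Fin d, β s ≠ β t → SepPair s t V)
    (s : Fin d) (n n' : Fin d → ℤ) (hnn : ∀ j, β j = β s → n j = n' j) (x : ℤ) :
    V (Function.update n' s x) - V n' = V (Function.update n s x) - V n := by
  classical
  have key : ∀ T : Finset (Fin d), (∀ j ∈ T, β j ≠ β s) →
      V (Function.update (fun j => if j ∈ T then n' j else n j) s x)
        - V (fun j => if j ∈ T then n' j else n j)
      = V (Function.update n s x) - V n := by
    intro T
    induction T using Finset.induction_on with
    | empty => intro _; simp
    | @insert t T ht ih =>
      intro hT
      have hts : β t ≠ β s := hT t (Finset.mem_insert_self t T)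
      have hfun : (fun j => if j ∈ insert t T then n' j else n j)
          = Function.update (fun j => if j ∈ T then n' j else n j) t (n' t) := by
        funext j
        by_cases hj : j = t
        · subst hj; simp [ht]
        · simp [Function.update_apply, hj, Finset.mem_insert]
      rw [hfun, step_lemma (hsep s t (fun hh => hts hh.symm)) _ x (n' t)]
      exact ih (fun j hj => hT j (Finset.mem_insert_of_mem hj))
  have h2 := key (Finset.univ.filter fun j => β j ≠ β s)
    (by intro j hj; simpa using (Finset.mem_filter.mp hj).2)
  have h3 : (fun j => if j ∈ Finset.univ.filter (fun j => β j ≠ β s) then n' j else n j)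
      = n' := by
    funext j
    by_cases hj : β j = β s
    · simp [hj, hnn j hj]
    · simp [hj]
  rw [h3] at h2
  exact h2

lemma block_indep {r d : ℕ} {V : (Fin d → ℤ) → ℂ} (β : Fin d → Fin r)
    (hsep : ∀ s t : Fin d, β s ≠ β t → SepPair s t V)
    (b : Fin r) (u w u' w' : Fin d → ℤ)
    (huw : ∀ j, β j ≠ b → u j = w j) (huw' : ∀ j, β j ≠ b → u' j = w' j)
    (hu : ∀ j, β j = b → u j = u' j) (hw : ∀ j, β j = b → w j = w' j) :
    V u - V w = V u' - V w' := by
  classical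
  have key : ∀ T : Finset (Fin d), (∀ j ∈ T, β j = b) →
      V (fun j => if j ∈ T then u j else w j) - V w
        = V (fun j => if j ∈ T then u' j else w' j) - V w' := by
    intro T
    induction T using Finset.induction_on with
    | empty => intro _; simp
    | @insert t T ht ih =>
      intro hT
      have htb : β t = b := hT t (Finset.mem_insert_self t T)
      have ihq := ih (fun j hj => hT j (Finset.mem_insert_of_mem hj))
      have hfun : (fun j => if j ∈ insert t T then u j else w j)
          = Function.update (fun j => if j ∈ T then u j else w j) t (u t) := by
        funext j
        by_cases hj : j = t
        · subst hj; simp [ht]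
        · simp [Function.update_apply, hj, Finset.mem_insert]
      have hfun' : (fun j => if j ∈ insert t T then u' j else w' j)
          = Function.update (fun j => if j ∈ T then u' j else w' j) t (u' t) := by
        funext j
        by_cases hj : j = t
        · subst hj; simp [ht]
        · simp [Function.update_apply, hj, Finset.mem_insert]
      have hagree : ∀ j, β j = β t → (fun j => if j ∈ T then u j else w j) j
          = (fun j => if j ∈ T then u' j else w' j) j := by
        intro j hj
        rw [htb] at hj
        simp only []
        by_cases hjT : j ∈ T
        · simp [hjT, hu j hj]
        · simp [hjT, hw j hj]
      have hL := deriv_indep β hsep t (fun j => if j ∈ T then u j else w j)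
        (fun j => if j ∈ T then u' j else w' j) hagree (u t)
      rw [hfun, hfun', ← hu t htb]
      linear_combination ihq - hL
  have h2 := key (Finset.univ.filter fun j => β j = b)
    (by intro j hj; simpa using (Finset.mem_filter.mp hj).2)
  have h3 : (fun j => if j ∈ Finset.univ.filter (fun j => β j = b) then u j else w j) = u := by
    funext j
    by_cases hj : β j = b
    · simp [hj]
    · simp [hj, huw j hj]
  have h4 : (fun j => if j ∈ Finset.univ.filter (fun j => β j = b) then u' j else w' j) = u' := by
    funext j
    by_cases hj : β j = b
    · simp [hj]
    · simp [hj, huw' j hj]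
  rw [h3, h4] at h2
  exact h2

lemma sum_formula {r d : ℕ} {V : (Fin d → ℤ) → ℂ} (β : Fin d → Fin r)
    (hsep : ∀ s t : Fin d, β s ≠ β t → SepPair s t V)
    (n : Fin d → ℤ) (S : Finset (Fin r)) :
    V (fun j => if β j ∈ S then n j else 0)
      = (∑ i ∈ S, (V (fun j => if β j = i then n j else 0) - V 0)) + V 0 := by
  classical
  induction S using Finset.induction_on with
  | empty =>
    simp only [Finset.notMem_empty, if_false, Finset.sum_empty, zero_add]
    congr 1
  | @insert b S hb ih =>
    have key := block_indep β hsep b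
      (fun j => if β j ∈ insert b S then n j else 0)
      (fun j => if β j ∈ S then n j else 0)
      (fun j => if β j = b then n j else 0)
      0
      (fun j hj => by simp [Finset.mem_insert, hj])
      (fun j hj => by simp [hj])
      (fun j hj => by simp [hj])
      (fun j hj => by simp [hj, hb])
    rw [Finset.sum_insert hb]
    linear_combination key + ih

end Aux

/-- Theorem 2.6: `V` is `(d₁,…,d_r)`-separable iff it is `(s,t)`-separable for every
pair of indices `s, t` lying in distinct blocks. -/
theorem blockSep_iff_sepPair {r d : ℕ} (dv : Fin r → ℕ) (hr : 2 ≤ r)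
    (hdv : ∀ j, 1 ≤ dv j) (hd : d = ∑ j, dv j)
    (q : Fin d → ℕ) (hq : ∀ j, 0 < q j)
    (V : (Fin d → ℤ) → ℂ) (hV : IsPeriodic q V) :
    BlockSep dv V ↔
      ∀ i m : Fin r, i < m → ∀ s t : Fin d,
        s ∈ blockSet dv i → t ∈ blockSet dv m → SepPair s t V := by
  classical
  have hr0 : 0 < r := by omega
  constructor
  · rintro ⟨Vb, hdep, hsum⟩ i m him s t hs ht
    refine ⟨fun n => ∑ j ∈ Finset.univ.erase m, Vb j n, Vb m, ?_, ?_, ?_⟩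
    · intro n n' h
      refine Finset.sum_congr rfl (fun j hj => hdep j n n' (fun k hk => ?_))
      refine h k ?_
      simp only [Set.mem_compl_iff, Set.mem_singleton_iff]
      intro hkt
      subst hkt
      exact blockSet_disj dv (Finset.ne_of_mem_erase hj) hk ht
    · intro n n' h
      refine hdep m n n' (fun k hk => ?_)
      refine h k ?_
      simp only [Set.mem_compl_iff, Set.mem_singleton_iff]
      intro hks
      subst hks
      exact blockSet_disj dv (ne_of_lt him) hs hk
    · intro n
      rw [hsum n]
      exact (Finset.sum_erase_add _ _ (Finset.mem_univ m)).symm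
  · intro H
    set β : Fin d → Fin r := fun j => (exists_block dv hd hr0 j).choose with hβdef
    have hβ : ∀ j, j ∈ blockSet dv (β j) := fun j => (exists_block dv hd hr0 j).choose_spec
    have hsep : ∀ s t : Fin d, β s ≠ β t → SepPair s t V := by
      intro s t hst
      rcases lt_trichotomy (β s) (β t) with h | h | h
      · exact H _ _ h s t (hβ s) (hβ t)
      · exact absurd h hst
      · exact sepPair_symm (H _ _ h t s (hβ t) (hβ s))
    refine ⟨fun i n => (V (fun j => if β j = i then n j else 0) - V 0)
        + (if i = (⟨0, hr0⟩ : Fin r) then V 0 else 0), ?_, ?_⟩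
    · intro i n n' h
      have heq : (fun j => if β j = i then n j else 0)
          = (fun j => if β j = i then n' j else 0) := by
        funext j
        by_cases hji : β j = i
        · have hjB : j ∈ blockSet dv i := by rw [← hji]; exact hβ j
          simp [hji, h j hjB]
        · simp [hji]
      simp only [heq]
    · intro n
      have hform := sum_formula β hsep n Finset.univ
      simp only [Finset.mem_univ, if_true] at hform
      rw [Finset.sum_add_distrib,
        Finset.sum_ite_eq' Finset.univ (⟨0, hr0⟩ : Fin r) (fun _ => V 0)]
      simp only [Finset.mem_univ, if_true]
      rw [← hform]
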